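/- Let R be a commutative ring in which 2 is invertible and let Q be a formal power series in one variable u over R whose constant coefficient is 1; write q_n for the coefficient of u^n in Q. Then Q(u)·Q(-u) = 1 if and only if for every r ≥ 1 one has q_{2r} = (-1)^{r-1}·(1/2)·q_r^2 + Σ_{s=1}^{r-1} (-1)^{s-1}·q_s·q_{2r-s}. -/

import Mathlib

private lemma aux_neg_one_pow_sub {R : Type*} [CommRing R] {n i : ℕ} (h : i ≤ n) :
    ((-1 : R)) ^ (n - i) = (-1) ^ n * (-1) ^ i := by
  have hsq : ((-1 : R)) ^ i * (-1) ^ i = 1 := by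
    rw [← pow_add]; exact Even.neg_one_pow ⟨i, rfl⟩
  calc ((-1 : R)) ^ (n - i) = (-1) ^ (n - i) * ((-1) ^ i * (-1) ^ i) := by rw [hsq, mul_one]
    _ = ((-1) ^ (n - i) * (-1) ^ i) * (-1) ^ i := by ring
    _ = (-1) ^ n * (-1) ^ i := by rw [← pow_add, Nat.sub_add_cancel h]

/-- For `Q ∈ R⟦u⟧` with constant coefficient `1` (and `2` invertible in `R`), the relation
`Q(u) * Q(-u) = 1` holds iff the coefficients `q_n` of `Q` satisfy Macdonald's relations
`q_{2r} = (-1)^(r-1) * (1/2) * q_r^2 + ∑_{s=1}^{r-1} (-1)^(s-1) * q_s * q_{2r-s}` for all `r ≥ 1`. -/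
theorem mul_rescale_neg_one_eq_one_iff {R : Type*} [CommRing R] [Invertible (2 : R)]
    (Q : PowerSeries R) (hQ : PowerSeries.constantCoeff Q = 1) :
    Q * PowerSeries.rescale (-1 : R) Q = 1 ↔
      ∀ r : ℕ, 1 ≤ r →
        PowerSeries.coeff (2 * r) Q =
          (-1 : R) ^ (r - 1) * ⅟(2 : R) * (PowerSeries.coeff r Q) ^ 2 +
            ∑ s ∈ Finset.Icc 1 (r - 1),
              (-1 : R) ^ (s - 1) * PowerSeries.coeff s Q
                * PowerSeries.coeff (2 * r - s) Q := by
  classical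
  have h2 : (⅟(2 : R)) * 2 = 1 := invOf_mul_self 2
  set q : ℕ → R := fun n => PowerSeries.coeff n Q with hqdef
  have hq0 : q 0 = 1 := by simpa [q, PowerSeries.coeff_zero_eq_constantCoeff] using hQ
  have two_cancel : ∀ a b : R, 2 * a = 2 * b → a = b := by
    intro a b h
    have := congrArg (fun x => ⅟(2 : R) * x) h
    simpa [← mul_assoc, h2] using this
  have hcoeff : ∀ n, PowerSeries.coeff n (Q * PowerSeries.rescale (-1) Q)
      = ∑ i ∈ Finset.range (n + 1), q i * ((-1 : R) ^ (n - i) * q (n - i)) := by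
    intro n
    rw [PowerSeries.coeff_mul, Finset.Nat.sum_antidiagonal_eq_sum_range_succ_mk]
    simp [q, PowerSeries.coeff_rescale]
  have hdouble : ∀ n, 2 * ∑ i ∈ Finset.range (n + 1), q i * ((-1 : R) ^ (n - i) * q (n - i))
      = ∑ i ∈ Finset.range (n + 1), ((-1 : R) ^ n + 1) * ((-1 : R) ^ i * q i * q (n - i)) := by
    intro n
    have hrefl : ∑ i ∈ Finset.range (n + 1), q i * ((-1 : R) ^ (n - i) * q (n - i))
        = ∑ i ∈ Finset.range (n + 1), q (n - i) * ((-1 : R) ^ (n - (n - i)) * q (n - (n - i))) := by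
      rw [← Finset.sum_range_reflect]
      simp
    rw [two_mul]
    nth_rewrite 2 [hrefl]
    rw [← Finset.sum_add_distrib]
    refine Finset.sum_congr rfl ?_
    intro i hi
    have hi' : i ≤ n := by
      simp only [Finset.mem_range] at hi; omega
    rw [Nat.sub_sub_self hi', aux_neg_one_pow_sub hi']
    ring
  -- the coefficient of `u^(2r)` in the product
  have heven : ∀ r : ℕ, PowerSeries.coeff (2 * r) (Q * PowerSeries.rescale (-1) Q)
      = ∑ i ∈ Finset.range (2 * r + 1), (-1 : R) ^ i * q i * q (2 * r - i) := by
    intro r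
    apply two_cancel
    rw [hcoeff, hdouble, Finset.mul_sum]
    refine Finset.sum_congr rfl ?_
    intro i _
    have : ((-1 : R)) ^ (2 * r) = 1 := Even.neg_one_pow (even_two_mul r)
    rw [this]; ring
  have hodd : ∀ n : ℕ, Odd n →
      PowerSeries.coeff n (Q * PowerSeries.rescale (-1) Q) = 0 := by
    intro n hn
    apply two_cancel
    rw [hcoeff, hdouble, mul_zero]
    have : ((-1 : R)) ^ n = -1 := Odd.neg_one_pow hn
    rw [this]
    simp
  -- splitting the symmetric sum
  have hsplit : ∀ t : ℕ, ∑ i ∈ Finset.range (2 * (t + 1) + 1),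
        (-1 : R) ^ i * q i * q (2 * (t + 1) - i)
      = (-1 : R) ^ (t + 1) * q (t + 1) * q (t + 1) + 2 * q (2 * (t + 1))
        + 2 * ∑ s ∈ Finset.Icc 1 t, (-1 : R) ^ s * q s * q (2 * (t + 1) - s) := by
    intro t
    set g : ℕ → R := fun i => (-1 : R) ^ i * q i * q (2 * (t + 1) - i) with hg
    have gsymm : ∀ i ≤ 2 * (t + 1), g (2 * (t + 1) - i) = g i := by
      intro i hi
      simp only [g]
      rw [Nat.sub_sub_self hi, aux_neg_one_pow_sub hi,
        Even.neg_one_pow (even_two_mul (t + 1))]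
      ring
    have h1 : 2 * (t + 1) + 1 = (t + 2) + (t + 1) := by omega
    rw [h1, Finset.sum_range_add]
    have h3 : ∑ i ∈ Finset.range (t + 1), g (t + 2 + i)
        = ∑ i ∈ Finset.range (t + 1), g i := by
      rw [← Finset.sum_range_reflect]
      refine Finset.sum_congr rfl ?_
      intro i hi
      have hi' : i ≤ t := by simp only [Finset.mem_range] at hi; omega
      have : t + 2 + (t + 1 - 1 - i) = 2 * (t + 1) - i := by omega
      rw [this, gsymm i (by omega)]
    rw [h3, Finset.sum_range_succ]
    have h4 : ∑ i ∈ Finset.range (t + 1), g i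
        = g 0 + ∑ s ∈ Finset.Icc 1 t, g s := by
      rw [Finset.sum_range_succ']
      have : Finset.Icc 1 t = Finset.Ico 1 (t + 1) := by
        rw [Finset.Ico_add_one_right_eq_Icc]
      rw [this, Finset.sum_Ico_eq_sum_range]
      simp [add_comm]
    rw [h4]
    have hg0 : g 0 = q (2 * (t + 1)) := by simp [g, hq0]
    have hgr : g (t + 1) = (-1 : R) ^ (t + 1) * q (t + 1) * q (t + 1) := by
      have : 2 * (t + 1) - (t + 1) = t + 1 := by omega
      simp [g, this]
    rw [hg0]
    have e : 2 * (t + 1) - (t + 1) = t + 1 := by omega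
    rw [e]
    ring
  -- the key equivalence at each even index
  have key : ∀ t : ℕ,
      (PowerSeries.coeff (2 * (t + 1)) (Q * PowerSeries.rescale (-1) Q) = 0 ↔
        q (2 * (t + 1)) = (-1 : R) ^ t * ⅟(2 : R) * (q (t + 1)) ^ 2
          + ∑ s ∈ Finset.Icc 1 t, (-1 : R) ^ (s - 1) * q s * q (2 * (t + 1) - s)) := by
    intro t
    rw [heven, hsplit]
    have hT : ∑ s ∈ Finset.Icc 1 t, (-1 : R) ^ s * q s * q (2 * (t + 1) - s)
        = -∑ s ∈ Finset.Icc 1 t, (-1 : R) ^ (s - 1) * q s * q (2 * (t + 1) - s) := by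
      rw [← Finset.sum_neg_distrib]
      refine Finset.sum_congr rfl ?_
      intro s hs
      have hs1 : 1 ≤ s := (Finset.mem_Icc.mp hs).1
      have : ((-1 : R)) ^ s = (-1) ^ (s - 1) * (-1) := by
        conv_lhs => rw [show s = s - 1 + 1 by omega]
        rw [pow_succ]
      rw [this]; ring
    rw [hT]
    set T := ∑ s ∈ Finset.Icc 1 t, (-1 : R) ^ (s - 1) * q s * q (2 * (t + 1) - s) with hTdef
    have hpow : ((-1 : R)) ^ (t + 1) = -((-1) ^ t) := by rw [pow_succ]; ring
    rw [hpow]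
    constructor
    · intro E
      linear_combination (⅟(2 : R)) * E - (q (2 * (t + 1)) - T) * h2
    · intro E
      linear_combination 2 * E + ((-1 : R) ^ t * (q (t + 1)) ^ 2) * h2
  constructor
  · intro h r hr
    obtain ⟨t, rfl⟩ : ∃ t, r = t + 1 := ⟨r - 1, (Nat.succ_pred_eq_of_pos hr).symm⟩
    have h0 : PowerSeries.coeff (2 * (t + 1)) (Q * PowerSeries.rescale (-1) Q) = 0 := by
      rw [h, PowerSeries.coeff_one]
      simp
    simpa using (key t).mp h0
  · intro h
    ext n
    rw [PowerSeries.coeff_one]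
    rcases Nat.even_or_odd n with he | ho
    · obtain ⟨k, hk⟩ := he
      rcases Nat.eq_zero_or_pos k with rfl | hk1
      · subst hk
        rw [hcoeff]
        simp [hq0]
      · obtain ⟨t, rfl⟩ : ∃ t, k = t + 1 := ⟨k - 1, (Nat.succ_pred_eq_of_pos hk1).symm⟩
        have hn : n = 2 * (t + 1) := by omega
        subst hn
        rw [if_neg (by omega)]
        exact (key t).mpr (by simpa using h (t + 1) (by omega))
    · have hne : n ≠ 0 := by rintro rfl; simp at ho
      rw [if_neg hne]
      exact hodd n ho
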